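/- If I' ⊑ I and h is a negation-free conjunction of network atoms, then QUAL(v, g_edge, g_node, h, I'(t)) ⊆ QUAL(v, g_edge, g_node, h, I(t)), provided I and I' agree on non-fluent atoms; hence |QUAL| is monotone under the ⊑-ordering. -/
import Mathlib


/-- Network formulas over labels `L`. -/
inductive Formula (L : Type) where
  | atom : L → Set ℝ → Formula L
  | and : Formula L → Formula L → Formula L
  | or : Formula L → Formula L → Formula L
  | not : Formula L → Formula L

/-- Satisfaction of a formula by a world (assignment of bounds to labels). -/
def Sat {L : Type} (W : L → Set ℝ) : Formula L → Prop
  | .atom l bnd =>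
      bnd = Set.Icc 0 1 ∨ (bnd ≠ ∅ ∧ bnd ≠ Set.Icc 0 1 ∧ W l ⊆ bnd)
  | .and f g => Sat W f ∧ Sat W g
  | .or f g => Sat W f ∨ Sat W g
  | .not f => ¬ Sat W f

/-- Negation-free formulas. -/
def NegFree {L : Type} : Formula L → Prop
  | .atom _ _ => True
  | .and f g => NegFree f ∧ NegFree g
  | .or f g => NegFree f ∧ NegFree g
  | .not _ => False

/-- Formulas built only from non-fluent atoms. -/
def NonFluentFormula {L : Type} (fluent : L → Prop) : Formula L → Prop
  | .atom l _ => ¬ fluent l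
  | .and f g => NonFluentFormula fluent f ∧ NonFluentFormula fluent g
  | .or f g => NonFluentFormula fluent f ∧ NonFluentFormula fluent g
  | .not f => NonFluentFormula fluent f

/-- Components: nodes and directed edges. -/
def Comp (V : Type) := V ⊕ (V × V)

/-- Network interpretations and interpretations. -/
def NetI (V L : Type) := Comp V → L → Set ℝ
def Interp (V L : Type) := ℕ → NetI V L

/-- `I' ⊑ I`: every bound in `I` is a subset of the corresponding bound in `I'`. -/
def ile {V L : Type} (I' I : Interp V L) : Prop :=
  ∀ t c lab, I t c lab ⊆ I' t c lab

/-- Eligible neighbors of `v` w.r.t. criteria `(gE, gN)` under `NI`. -/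
def ELIG {V L : Type} (E : V → V → Prop) (NI : NetI V L) (v : V)
    (gE gN : Formula L) : Set V :=
  {v' | E v' v ∧ Sat (NI (Sum.inl v')) gN ∧ Sat (NI (Sum.inr (v', v))) gE}

/-- Qualifying neighbors: eligible neighbors additionally satisfying `h`. -/
def QUAL {V L : Type} (E : V → V → Prop) (NI : NetI V L) (v : V)
    (gE gN h : Formula L) : Set V :=
  {v' ∈ ELIG E NI v gE gN | Sat (NI (Sum.inl v')) h}

lemma sat_congr_nonfluent {L : Type} (fluent : L → Prop) (W W' : L → Set ℝ)
    (hag : ∀ l, ¬ fluent l → W l = W' l) :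
    ∀ f : Formula L, NonFluentFormula fluent f → (Sat W' f ↔ Sat W f)
  | .atom l bnd, hnf => by simp [Sat, hag l hnf]
  | .and f g, ⟨hf, hg⟩ => by
      simp [Sat, sat_congr_nonfluent fluent W W' hag f hf,
        sat_congr_nonfluent fluent W W' hag g hg]
  | .or f g, ⟨hf, hg⟩ => by
      simp [Sat, sat_congr_nonfluent fluent W W' hag f hf,
        sat_congr_nonfluent fluent W W' hag g hg]
  | .not f, hf => by
      simp [Sat, sat_congr_nonfluent fluent W W' hag f hf]

lemma sat_mono_negfree {L : Type} (W W' : L → Set ℝ) (hsub : ∀ l, W l ⊆ W' l) :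
    ∀ f : Formula L, NegFree f → Sat W' f → Sat W f
  | .atom l bnd, _, hs => by
      rcases hs with h | ⟨h1, h2, h3⟩
      · exact Or.inl h
      · exact Or.inr ⟨h1, h2, (hsub l).trans h3⟩
  | .and f g, ⟨hf, hg⟩, ⟨sf, sg⟩ =>
      ⟨sat_mono_negfree W W' hsub f hf sf, sat_mono_negfree W W' hsub g hg sg⟩
  | .or f g, ⟨hf, hg⟩, hs =>
      hs.imp (sat_mono_negfree W W' hsub f hf) (sat_mono_negfree W W' hsub g hg)

/-- if `I' ⊑ I`, `I` and `I'` agree on non-fluent atoms,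
`gE, gN` are non-fluent, and `h` is a negation-free conjunction of atoms,
then `QUAL(v,gE,gN,h,I'(t)) ⊆ QUAL(v,gE,gN,h,I(t))` for all `t, v`. -/
theorem qual_monotone {V L : Type}
    (E : V → V → Prop) (fluent : L → Prop) (I I' : Interp V L)
    (hle : ile I' I)
    (hagree : ∀ t c lab, ¬ fluent lab → I t c lab = I' t c lab)
    (gE gN h : Formula L)
    (hgE : NonFluentFormula fluent gE) (hgN : NonFluentFormula fluent gN)
    (hh : NegFree h) :
    ∀ (t : ℕ) (v : V),
      QUAL E (I' t) v gE gN h ⊆ QUAL E (I t) v gE gN h := by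
  intro t v v' hv'
  obtain ⟨⟨hE, hgNsat, hgEsat⟩, hhsat⟩ := hv'
  refine ⟨⟨hE, ?_, ?_⟩, ?_⟩
  · exact (sat_congr_nonfluent fluent (I t (Sum.inl v')) (I' t (Sum.inl v'))
      (fun l hl => hagree t _ l hl) gN hgN).mp hgNsat
  · exact (sat_congr_nonfluent fluent (I t (Sum.inr (v', v))) (I' t (Sum.inr (v', v)))
      (fun l hl => hagree t _ l hl) gE hgE).mp hgEsat
  · exact sat_mono_negfree (I t (Sum.inl v')) (I' t (Sum.inl v'))
      (fun l => hle t _ l) h hh hhsat
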